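/- Let A ∈ ℂ^{M×N} with singular values in [0,1], let P be an even real polynomial with P(x) ∈ [0,1] for x ∈ [−1,1], P(x) ≥ 1−χ on [t₁,t₂], and P(x) ≤ χ on [0,t₁−θ₁]∪[t₂+θ₂,1], where χ = δ²/3. Let u ∈ ℂ^N, ‖u‖ ≤ 1. If A has a singular value in [t₁,t₂] and ‖Π_A^{[t₁,t₂]}u‖ ≥ δ, then u†P(√(A†A))u ≥ 2δ²/3; if A has no singular value in (t₁−θ₁, t₂+θ₂), then u†P(√(A†A))u ≤ δ²/3. Hence any estimate ẑ of u†P(√(A†A))u with additive error at most δ²/7 distinguishes the two cases (it exceeds δ²/2 in the first case and is below δ²/2 in the second). -/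

import Mathlib

open Matrix BigOperators

/-- Let `A = ∑ i, σᵢ • uᵢvᵢ†` with `{vᵢ}` orthonormal, `σᵢ ∈ [0,1]`,
`P` even with `P ∈ [0,1]` on `[−1,1]`, `P ≥ 1−χ` on `[t₁,t₂]`, `P ≤ χ` on
`[0,t₁−θ₁]∪[t₂+θ₂,1]` where `χ = δ²/3`, and `u = ∑ αᵢvᵢ` with `‖u‖ ≤ 1`.
Set `Q = u†P(√(A†A))u`. If `A` has a singular value in `[t₁,t₂]` and
`‖Π_A^{[t₁,t₂]}u‖ ≥ δ`, then `Q ≥ 2δ²/3`; if `A` has no singular value in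
`(t₁−θ₁,t₂+θ₂)`, then `Q ≤ δ²/3`. Hence any estimate `z` of `Q` with additive
error `≤ δ²/7` exceeds `δ²/2` in the first case and is below `δ²/2` in the second. -/
theorem svt_singular_value_test {M N : ℕ} (A : Matrix (Fin M) (Fin N) ℂ)
    (σ : Fin N → ℝ) (uu : Fin N → Fin M → ℂ) (v : Fin N → Fin N → ℂ)
    (hv : ∀ i j, star (v i) ⬝ᵥ v j = if i = j then 1 else 0)
    (hA : A = ∑ i, (σ i : ℂ) • Matrix.vecMulVec (uu i) (star (v i)))
    (hσ : ∀ i, σ i ∈ Set.Icc (0 : ℝ) 1)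
    (t₁ t₂ θ₁ θ₂ δ : ℝ)
    (h0 : 0 ≤ t₁ - θ₁) (hθ₁ : 0 < θ₁) (h12 : t₁ < t₂) (hθ₂ : 0 < θ₂) (h1 : t₂ + θ₂ ≤ 1)
    (hδ : 0 < δ) (hδ1 : δ ≤ 1)
    (P : Polynomial ℝ) (hPeven : ∀ x : ℝ, P.eval (-x) = P.eval x)
    (hP01 : ∀ x ∈ Set.Icc (-1 : ℝ) 1, P.eval x ∈ Set.Icc (0 : ℝ) 1)
    (hPbig : ∀ x ∈ Set.Icc t₁ t₂, 1 - δ ^ 2 / 3 ≤ P.eval x)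
    (hPsmall : ∀ x, x ∈ Set.Icc 0 (t₁ - θ₁) ∪ Set.Icc (t₂ + θ₂) 1 → P.eval x ≤ δ ^ 2 / 3)
    (α : Fin N → ℂ) (u : Fin N → ℂ) (hu : u = ∑ i, α i • v i)
    (hnorm : ∑ i, ‖α i‖ ^ 2 ≤ 1)
    (Q : ℝ)
    (hQ : Q = (star u ⬝ᵥ (∑ i, ((P.eval (σ i) : ℝ) : ℂ) •
        Matrix.vecMulVec (v i) (star (v i))).mulVec u).re) :
    (((∃ i, σ i ∈ Set.Icc t₁ t₂) ∧
        δ ^ 2 ≤ ∑ i ∈ Finset.univ.filter (fun i => t₁ ≤ σ i ∧ σ i ≤ t₂), ‖α i‖ ^ 2) →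
      2 * δ ^ 2 / 3 ≤ Q) ∧
    ((∀ i, σ i ∉ Set.Ioo (t₁ - θ₁) (t₂ + θ₂)) → Q ≤ δ ^ 2 / 3) ∧
    (∀ z : ℝ, |z - Q| ≤ δ ^ 2 / 7 →
      (((∃ i, σ i ∈ Set.Icc t₁ t₂) ∧
          δ ^ 2 ≤ ∑ i ∈ Finset.univ.filter (fun i => t₁ ≤ σ i ∧ σ i ≤ t₂), ‖α i‖ ^ 2) →
        δ ^ 2 / 2 < z) ∧
      ((∀ i, σ i ∉ Set.Ioo (t₁ - θ₁) (t₂ + θ₂)) → z < δ ^ 2 / 2)) := by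
  -- notation
  set c : Fin N → ℂ := fun i => ((P.eval (σ i) : ℝ) : ℂ) with hc
  -- ⟨vᵢ, u⟩ = αᵢ
  have hdot : ∀ i, star (v i) ⬝ᵥ u = α i := by
    intro i
    rw [hu]
    have : star (v i) ⬝ᵥ (∑ j, α j • v j) = ∑ j, α j * (star (v i) ⬝ᵥ v j) := by
      simp only [dotProduct, Finset.sum_apply, Pi.smul_apply, smul_eq_mul, Finset.mul_sum]
      rw [Finset.sum_comm]
      exact Finset.sum_congr rfl fun j _ => Finset.sum_congr rfl fun k _ => by ring
    rw [this]
    simp [hv]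
  have hsuv : ∀ i, star u ⬝ᵥ v i = star (α i) := by
    intro i
    rw [star_dotProduct, hdot]
  -- matrix applied to u
  have hMu : (∑ i, c i • Matrix.vecMulVec (v i) (star (v i))).mulVec u
      = fun j => ∑ i, c i * α i * v i j := by
    funext j
    simp only [Matrix.mulVec, dotProduct, Matrix.sum_apply, Matrix.smul_apply,
      Matrix.vecMulVec_apply, smul_eq_mul, Finset.sum_mul]
    rw [Finset.sum_comm]
    refine Finset.sum_congr rfl fun i _ => ?_
    have h := hdot i
    simp only [dotProduct] at h
    calc ∑ k, c i * (v i j * star (v i) k) * u k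
        = c i * v i j * ∑ k, star (v i) k * u k := by
          rw [Finset.mul_sum]; exact Finset.sum_congr rfl fun k _ => by ring
      _ = c i * α i * v i j := by rw [h]; ring
  -- key formula
  have key : Q = ∑ i, P.eval (σ i) * ‖α i‖ ^ 2 := by
    rw [hQ, hMu]
    have : star u ⬝ᵥ (fun j => ∑ i, c i * α i * v i j)
        = ∑ i, c i * α i * star (α i) := by
      simp only [dotProduct, Finset.mul_sum]
      rw [Finset.sum_comm]
      refine Finset.sum_congr rfl fun i _ => ?_
      have h := hsuv i
      simp only [dotProduct] at h
      calc ∑ k, star u k * (c i * α i * v i k)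
          = c i * α i * ∑ k, star u k * v i k := by
            rw [Finset.mul_sum]; exact Finset.sum_congr rfl fun k _ => by ring
        _ = c i * α i * star (α i) := by rw [h]
    rw [this, Complex.re_sum]
    refine Finset.sum_congr rfl fun i _ => ?_
    have : c i * α i * star (α i) = ((P.eval (σ i) * ‖α i‖ ^ 2 : ℝ) : ℂ) := by
      rw [hc, mul_assoc]
      simp only [Complex.star_def, Complex.mul_conj, Complex.normSq_eq_norm_sq,
        Complex.ofReal_mul]
    rw [this, Complex.ofReal_re]
  -- basic facts
  have hσ11 : ∀ i, σ i ∈ Set.Icc (-1 : ℝ) 1 := fun i =>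
    ⟨le_trans (by norm_num) (hσ i).1, (hσ i).2⟩
  have hPnn : ∀ i, 0 ≤ P.eval (σ i) := fun i => (hP01 _ (hσ11 i)).1
  have hαnn : ∀ i, (0:ℝ) ≤ ‖α i‖ ^ 2 := fun i => by positivity
  -- lower bound
  have lower : ((∃ i, σ i ∈ Set.Icc t₁ t₂) ∧
        δ ^ 2 ≤ ∑ i ∈ Finset.univ.filter (fun i => t₁ ≤ σ i ∧ σ i ≤ t₂), ‖α i‖ ^ 2) →
      2 * δ ^ 2 / 3 ≤ Q := by
    rintro ⟨-, hsum⟩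
    rw [key]
    have step1 : ∑ i ∈ Finset.univ.filter (fun i => t₁ ≤ σ i ∧ σ i ≤ t₂),
        P.eval (σ i) * ‖α i‖ ^ 2 ≤ ∑ i, P.eval (σ i) * ‖α i‖ ^ 2 :=
      Finset.sum_le_sum_of_subset_of_nonneg (Finset.filter_subset _ _)
        (fun i _ _ => mul_nonneg (hPnn i) (hαnn i))
    have step2 : (1 - δ ^ 2 / 3) * δ ^ 2 ≤
        ∑ i ∈ Finset.univ.filter (fun i => t₁ ≤ σ i ∧ σ i ≤ t₂),
          P.eval (σ i) * ‖α i‖ ^ 2 := by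
      calc (1 - δ ^ 2 / 3) * δ ^ 2
          ≤ (1 - δ ^ 2 / 3) * ∑ i ∈ Finset.univ.filter (fun i => t₁ ≤ σ i ∧ σ i ≤ t₂),
              ‖α i‖ ^ 2 := by
            apply mul_le_mul_of_nonneg_left hsum
            nlinarith [sq_nonneg δ]
        _ = ∑ i ∈ Finset.univ.filter (fun i => t₁ ≤ σ i ∧ σ i ≤ t₂),
              (1 - δ ^ 2 / 3) * ‖α i‖ ^ 2 := Finset.mul_sum _ _ _
        _ ≤ ∑ i ∈ Finset.univ.filter (fun i => t₁ ≤ σ i ∧ σ i ≤ t₂),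
              P.eval (σ i) * ‖α i‖ ^ 2 := by
            refine Finset.sum_le_sum fun i hi => ?_
            simp only [Finset.mem_filter] at hi
            exact mul_le_mul_of_nonneg_right (hPbig _ ⟨hi.2.1, hi.2.2⟩) (hαnn i)
    have hδ2 : δ ^ 2 ≤ 1 := by nlinarith
    have hδ4 : δ ^ 2 * δ ^ 2 ≤ δ ^ 2 * 1 := mul_le_mul_of_nonneg_left hδ2 (by positivity)
    nlinarith [step1, step2, hδ4]
  have upper : (∀ i, σ i ∉ Set.Ioo (t₁ - θ₁) (t₂ + θ₂)) → Q ≤ δ ^ 2 / 3 := by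
    intro hno
    rw [key]
    have : ∀ i, P.eval (σ i) ≤ δ ^ 2 / 3 := by
      intro i
      apply hPsmall
      rcases le_or_gt (σ i) (t₁ - θ₁) with h | h
      · exact Or.inl ⟨(hσ i).1, h⟩
      · rcases le_or_gt (t₂ + θ₂) (σ i) with h' | h'
        · exact Or.inr ⟨h', (hσ i).2⟩
        · exact absurd (Set.mem_Ioo.mpr ⟨h, h'⟩) (hno i)
    calc ∑ i, P.eval (σ i) * ‖α i‖ ^ 2
        ≤ ∑ i, δ ^ 2 / 3 * ‖α i‖ ^ 2 :=
          Finset.sum_le_sum fun i _ => mul_le_mul_of_nonneg_right (this i) (hαnn i)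
      _ = δ ^ 2 / 3 * ∑ i, ‖α i‖ ^ 2 := (Finset.mul_sum _ _ _).symm
      _ ≤ δ ^ 2 / 3 * 1 := by
          apply mul_le_mul_of_nonneg_left hnorm; positivity
      _ = δ ^ 2 / 3 := mul_one _
  refine ⟨lower, upper, fun z hz => ⟨fun h => ?_, fun h => ?_⟩⟩
  · have := lower h
    have habs := abs_le.mp hz
    nlinarith
  · have := upper h
    have habs := abs_le.mp hz
    nlinarith
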